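/- For every ℓ ∈ ℕ with ℓ ≥ 1, there exist a set P of ℓ^ℓ points in ℝ² and a set B of ℓ^ℓ dyadic rectangles in ℝ² such that the incidence graph between P and B is K_{2,2}-free and the number of incidences (pairs (p, R) ∈ P × B with p ∈ R) equals ℓ · ℓ^ℓ. In particular, setting n := ℓ^ℓ, the number of incidences in a K_{2,2}-free point–dyadic-rectangle configuration with n points and n rectangles can be Ω(n · log n / log log n). -/

import Mathlib

/-- The dyadic interval `[s·2^t, (s+1)·2^t) ⊆ ℝ`, for `s, t ∈ ℤ`. -/
def dyadicInterval (s t : ℤ) : Set ℝ :=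
  Set.Ico ((s : ℝ) * (2 : ℝ) ^ t) (((s : ℝ) + 1) * (2 : ℝ) ^ t)

/-- The dyadic rectangle in `ℝ²` with parameters `q = (s₁, t₁, s₂, t₂)`, namely
`[s₁·2^{t₁}, (s₁+1)·2^{t₁}) × [s₂·2^{t₂}, (s₂+1)·2^{t₂})`. -/
def dyadicRect (q : ℤ × ℤ × ℤ × ℤ) : Set (ℝ × ℝ) :=
  {p | p.1 ∈ dyadicInterval q.1 q.2.1 ∧ p.2 ∈ dyadicInterval q.2.2.1 q.2.2.2}

namespace DyadicLB


/-- Base-`b` value of the digit string `f 0, f 1, ..., f (m-1)` (most significant first). -/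
def Nval (b : ℕ) (f : ℕ → ℕ) : ℕ → ℕ
  | 0 => 0
  | m + 1 => Nval b f m * b + f m

lemma Nval_lt (b : ℕ) (f : ℕ → ℕ) (m : ℕ) (h : ∀ j < m, f j < b) :
    Nval b f m < b ^ m := by
  induction m with
  | zero => simp [Nval]
  | succ m ih =>
    have h1 : Nval b f m < b ^ m := ih (fun j hj => h j (by omega))
    have h2 : f m < b := h m (by omega)
    rw [pow_succ]
    calc Nval b f m * b + f m < (Nval b f m + 1) * b := by rw [add_mul, one_mul]; omega
      _ ≤ b ^ m * b := Nat.mul_le_mul_right b h1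

lemma Nval_congr {b : ℕ} {f g : ℕ → ℕ} {m : ℕ} (h : ∀ j < m, f j = g j) :
    Nval b f m = Nval b g m := by
  induction m with
  | zero => rfl
  | succ m ih =>
    simp only [Nval, ih (fun j hj => h j (by omega)), h m (by omega)]

lemma Nval_split (b : ℕ) (f : ℕ → ℕ) (i n : ℕ) :
    Nval b f (i + n) = Nval b f i * b ^ n + Nval b (fun j => f (i + j)) n := by
  induction n with
  | zero => simp [Nval]
  | succ n ih =>
    have h1 : i + (n + 1) = (i + n) + 1 := by omega
    rw [h1, Nval, ih, Nval]
    ring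

lemma Nval_div (b : ℕ) (hb : 0 < b) (f : ℕ → ℕ) (i n : ℕ)
    (h : ∀ j < n, f (i + j) < b) :
    Nval b f (i + n) / b ^ n = Nval b f i := by
  rw [Nval_split, mul_comm, Nat.mul_add_div (by positivity),
    Nat.div_eq_of_lt (Nval_lt b _ n h), add_zero]

lemma Nval_inj {b : ℕ} (hb : 0 < b) {f g : ℕ → ℕ} {m : ℕ}
    (hf : ∀ j < m, f j < b) (hg : ∀ j < m, g j < b)
    (h : Nval b f m = Nval b g m) : ∀ j < m, f j = g j := by
  induction m with
  | zero => omega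
  | succ m ih =>
    have hfm := hf m (by omega)
    have hgm := hg m (by omega)
    have hmod : f m = g m := by
      have e1 : (Nval b f m * b + f m) % b = f m := by
        rw [add_comm, Nat.add_mul_mod_self_right, Nat.mod_eq_of_lt hfm]
      have e2 : (Nval b g m * b + g m) % b = g m := by
        rw [add_comm, Nat.add_mul_mod_self_right, Nat.mod_eq_of_lt hgm]
      rw [← e1, ← e2, show (Nval b f m * b + f m) = Nval b f (m+1) from rfl,
        show (Nval b g m * b + g m) = Nval b g (m+1) from rfl, h]
    have hN : Nval b f m = Nval b g m := by
      have : Nval b f m * b + f m = Nval b g m * b + g m := h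
      rw [hmod] at this
      have := Nat.add_right_cancel this
      exact Nat.eq_of_mul_eq_mul_right hb this
    intro j hj
    rcases Nat.lt_succ_iff_lt_or_eq.1 hj with hj' | rfl
    · exact ih (fun j hj => hf j (by omega)) (fun j hj => hg j (by omega)) hN j hj'
    · exact hmod



lemma mem_dyadic_iff (M : ℕ) (s : ℤ) (a c : ℕ) (hac : a ≤ c) :
    (M : ℝ) / 2 ^ c ∈ dyadicInterval s (-(a : ℤ)) ↔ ((M / 2 ^ (c - a) : ℕ) : ℤ) = s := by
  have h2a : (0 : ℝ) < 2 ^ a := by positivity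
  have h2K : (0 : ℝ) < 2 ^ (c - a) := by positivity
  have hsplit : (2 : ℝ) ^ c = 2 ^ (c - a) * 2 ^ a := by
    rw [← pow_add]; congr 1; omega
  have hzpow : (2 : ℝ) ^ (-(a : ℤ)) = ((2 : ℝ) ^ a)⁻¹ := by
    rw [zpow_neg, zpow_natCast]
  rw [dyadicInterval, Set.mem_Ico, hzpow]
  have e1 : (s : ℝ) * ((2 : ℝ) ^ a)⁻¹ ≤ (M : ℝ) / 2 ^ c ↔ (s : ℝ) * 2 ^ (c - a) ≤ M := by
    rw [hsplit, ← div_eq_mul_inv, div_le_div_iff₀ h2a (by positivity),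
      show (s : ℝ) * (2 ^ (c - a) * 2 ^ a) = (s * 2 ^ (c - a)) * 2 ^ a by ring]
    exact mul_le_mul_iff_of_pos_right h2a
  have e2 : (M : ℝ) / 2 ^ c < ((s : ℝ) + 1) * ((2 : ℝ) ^ a)⁻¹ ↔
      (M : ℝ) < ((s : ℝ) + 1) * 2 ^ (c - a) := by
    rw [hsplit, ← div_eq_mul_inv, div_lt_div_iff₀ (by positivity) h2a,
      show ((s : ℝ) + 1) * (2 ^ (c - a) * 2 ^ a) = (((s : ℝ) + 1) * 2 ^ (c - a)) * 2 ^ a by ring]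
    exact mul_lt_mul_iff_of_pos_right h2a
  rw [e1, e2]
  have c1 : ((s : ℝ) * 2 ^ (c - a) ≤ M) ↔ (s * 2 ^ (c - a) ≤ (M : ℤ)) := by
    constructor
    · intro h; exact_mod_cast h
    · intro h; exact_mod_cast h
  have c2 : ((M : ℝ) < ((s : ℝ) + 1) * 2 ^ (c - a)) ↔ ((M : ℤ) < (s + 1) * 2 ^ (c - a)) := by
    constructor
    · intro h; exact_mod_cast h
    · intro h; exact_mod_cast h
  rw [c1, c2]
  have hK : (0 : ℤ) < 2 ^ (c - a) := by positivity
  have hcast : ((M / 2 ^ (c - a) : ℕ) : ℤ) = (M : ℤ) / 2 ^ (c - a) := by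
    push_cast [Int.natCast_div]
    rfl
  rw [hcast]
  constructor
  · rintro ⟨h1, h2⟩
    have l1 := (Int.le_ediv_iff_mul_le hK).2 h1
    have l2 := (Int.ediv_lt_iff_lt_mul hK).2 h2
    omega
  · rintro rfl
    exact ⟨(Int.le_ediv_iff_mul_le hK).1 le_rfl, (Int.ediv_lt_iff_lt_mul hK).1 (lt_add_one _)⟩




/-- Extend a `Fin ℓ`-indexed digit string to `ℕ → ℕ`. -/
def wext (ℓ : ℕ) (w : Fin ℓ → Fin ℓ) : ℕ → ℕ :=
  fun j => if h : j < ℓ then (w ⟨j, h⟩ : ℕ) else 0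

lemma wext_lt_self {ℓ : ℕ} (hℓ : 0 < ℓ) (w : Fin ℓ → Fin ℓ) (j : ℕ) : wext ℓ w j < ℓ := by
  unfold wext; split
  · exact (w _).isLt
  · exact hℓ

lemma wext_lt {ℓ : ℕ} (w : Fin ℓ → Fin ℓ) (j : ℕ) : wext ℓ w j < 2 ^ ℓ := by
  unfold wext; split
  · exact lt_trans (w _).isLt (Nat.lt_two_pow_self)
  · positivity

/-- The scale of the rectangle encoded by `u`. -/
def sc (ℓ : ℕ) (u : Fin ℓ → Fin ℓ) : ℕ := wext ℓ u 0

lemma sc_lt {ℓ : ℕ} (hℓ : 0 < ℓ) (u : Fin ℓ → Fin ℓ) : sc ℓ u < ℓ := wext_lt_self hℓ u 0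

/-- The digits of the rectangle encoded by `u`: its scale is `i = sc ℓ u = u 0`, and its
digits at positions `j ≠ i` are: `u (j+1)` for `j < i`, `u j` for `j > i`. -/
def dd (ℓ : ℕ) (u : Fin ℓ → Fin ℓ) : ℕ → ℕ :=
  fun j => if j < sc ℓ u then wext ℓ u (j + 1) else wext ℓ u j

lemma dd_lt_self {ℓ : ℕ} (hℓ : 0 < ℓ) (u : Fin ℓ → Fin ℓ) (j : ℕ) : dd ℓ u j < ℓ := by
  unfold dd; split <;> exact wext_lt_self hℓ u _

lemma dd_lt {ℓ : ℕ} (u : Fin ℓ → Fin ℓ) (j : ℕ) : dd ℓ u j < 2 ^ ℓ := by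
  unfold dd; split <;> exact wext_lt u _

/-- The x-coordinate numerator: base-`2^ℓ` number with digits `w 0 w 1 ⋯` (most significant
first). -/
def Xv (ℓ : ℕ) (w : Fin ℓ → Fin ℓ) : ℕ := Nval (2 ^ ℓ) (wext ℓ w) ℓ

/-- The y-coordinate numerator: digits in reversed order. -/
def Yv (ℓ : ℕ) (w : Fin ℓ → Fin ℓ) : ℕ := Nval (2 ^ ℓ) (fun j => wext ℓ w (ℓ - 1 - j)) ℓ

/-- The point associated to the digit string `w`. -/
noncomputable def pt (ℓ : ℕ) (w : Fin ℓ → Fin ℓ) : ℝ × ℝ :=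
  ((Xv ℓ w : ℝ) / 2 ^ (ℓ * ℓ), (Yv ℓ w : ℝ) / 2 ^ (ℓ * ℓ))

/-- The rectangle parameters encoded by `u`. -/
def rp (ℓ : ℕ) (u : Fin ℓ → Fin ℓ) : ℤ × ℤ × ℤ × ℤ :=
  ((Nval (2 ^ ℓ) (dd ℓ u) (sc ℓ u) : ℤ),
   -((sc ℓ u * ℓ : ℕ) : ℤ),
   (Nval (2 ^ ℓ) (fun j => dd ℓ u (ℓ - 1 - j)) (ℓ - 1 - sc ℓ u) : ℤ),
   -(((ℓ - 1 - sc ℓ u) * ℓ : ℕ) : ℤ))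

/-- The string whose digits agree with those of the rectangle of `u` away from the
scale position `i = sc ℓ u`, and whose digit at position `i` is `a`. -/
def wmod (ℓ : ℕ) (u : Fin ℓ → Fin ℓ) (a : Fin ℓ) : Fin ℓ → Fin ℓ :=
  fun j =>
    if (j : ℕ) = sc ℓ u then a
    else ⟨dd ℓ u j, dd_lt_self (lt_of_le_of_lt (Nat.zero_le _) j.isLt) u j⟩

lemma wext_wmod_eq {ℓ : ℕ} (u : Fin ℓ → Fin ℓ) (a : Fin ℓ) (j : ℕ) (hj : j < ℓ)
    (hne : j ≠ sc ℓ u) : wext ℓ (wmod ℓ u a) j = dd ℓ u j := by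
  unfold wext wmod
  rw [dif_pos hj, if_neg hne]

lemma wext_wmod_sc {ℓ : ℕ} (u : Fin ℓ → Fin ℓ) (a : Fin ℓ) (hℓ : 0 < ℓ) :
    wext ℓ (wmod ℓ u a) (sc ℓ u) = (a : ℕ) := by
  unfold wext wmod
  rw [dif_pos (sc_lt hℓ u), if_pos rfl]



lemma pt_mem_rect_iff {ℓ : ℕ} (hℓ : 1 ≤ ℓ) (w u : Fin ℓ → Fin ℓ) :
    pt ℓ w ∈ dyadicRect (rp ℓ u) ↔
      ∀ j < ℓ, j ≠ sc ℓ u → wext ℓ w j = dd ℓ u j := by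
  have hiℓ : sc ℓ u < ℓ := sc_lt hℓ u
  set i := sc ℓ u with hi
  have hb : 0 < 2 ^ ℓ := by positivity
  -- the x-coordinate condition
  have hax : i * ℓ ≤ ℓ * ℓ := Nat.mul_le_mul_right _ (le_of_lt hiℓ)
  have hxdiv : Xv ℓ w / (2 ^ ℓ) ^ (ℓ - i) = Nval (2 ^ ℓ) (wext ℓ w) i := by
    have h := Nval_div (2 ^ ℓ) hb (wext ℓ w) i (ℓ - i) (fun j _ => wext_lt w _)
    rwa [show i + (ℓ - i) = ℓ from by omega] at h
  have hex : ℓ * ℓ - i * ℓ = ℓ * (ℓ - i) := by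
    rw [Nat.mul_comm ℓ (ℓ - i), Nat.sub_mul]
  have hxc : ((Xv ℓ w : ℝ) / 2 ^ (ℓ * ℓ) ∈
        dyadicInterval (Nval (2 ^ ℓ) (dd ℓ u) i : ℤ) (-((i * ℓ : ℕ) : ℤ))) ↔
      Nval (2 ^ ℓ) (wext ℓ w) i = Nval (2 ^ ℓ) (dd ℓ u) i := by
    rw [mem_dyadic_iff _ _ _ _ hax, hex, pow_mul, Nat.cast_inj, hxdiv]
  -- the y-coordinate condition
  have hay : (ℓ - 1 - i) * ℓ ≤ ℓ * ℓ := Nat.mul_le_mul_right _ (by omega)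
  have hydiv : Yv ℓ w / (2 ^ ℓ) ^ (i + 1) =
      Nval (2 ^ ℓ) (fun j => wext ℓ w (ℓ - 1 - j)) (ℓ - 1 - i) := by
    have h := Nval_div (2 ^ ℓ) hb (fun j => wext ℓ w (ℓ - 1 - j)) (ℓ - 1 - i) (i + 1)
      (fun j _ => wext_lt w _)
    rwa [show (ℓ - 1 - i) + (i + 1) = ℓ from by omega] at h
  have hey : ℓ * ℓ - (ℓ - 1 - i) * ℓ = ℓ * (i + 1) := by
    rw [Nat.mul_comm ℓ (i + 1), ← Nat.sub_mul, show ℓ - (ℓ - 1 - i) = i + 1 from by omega]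
  have hyc : ((Yv ℓ w : ℝ) / 2 ^ (ℓ * ℓ) ∈
        dyadicInterval (Nval (2 ^ ℓ) (fun j => dd ℓ u (ℓ - 1 - j)) (ℓ - 1 - i) : ℤ)
          (-(((ℓ - 1 - i) * ℓ : ℕ) : ℤ))) ↔
      Nval (2 ^ ℓ) (fun j => wext ℓ w (ℓ - 1 - j)) (ℓ - 1 - i) =
        Nval (2 ^ ℓ) (fun j => dd ℓ u (ℓ - 1 - j)) (ℓ - 1 - i) := by
    rw [mem_dyadic_iff _ _ _ _ hay, hey, pow_mul, Nat.cast_inj, hydiv]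
  have hmem : pt ℓ w ∈ dyadicRect (rp ℓ u) ↔
      (Nval (2 ^ ℓ) (wext ℓ w) i = Nval (2 ^ ℓ) (dd ℓ u) i ∧
       Nval (2 ^ ℓ) (fun j => wext ℓ w (ℓ - 1 - j)) (ℓ - 1 - i) =
         Nval (2 ^ ℓ) (fun j => dd ℓ u (ℓ - 1 - j)) (ℓ - 1 - i)) := by
    rw [← hxc, ← hyc]
    rfl
  rw [hmem]
  constructor
  · rintro ⟨h1, h2⟩ j hj hne
    rcases Nat.lt_or_ge j i with hji | hji
    · exact Nval_inj hb (fun k _ => wext_lt w k) (fun k _ => dd_lt u k) h1 j hji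
    · have hji' : i < j := by omega
      have h2' := Nval_inj hb (fun k _ => wext_lt w _) (fun k _ => dd_lt u _) h2
        (ℓ - 1 - j) (by omega)
      simpa [show ℓ - 1 - (ℓ - 1 - j) = j from by omega] using h2'
  · intro h
    constructor
    · exact Nval_congr (fun j hj => h j (by omega) (by omega))
    · exact Nval_congr (fun j hj => h (ℓ - 1 - j) (by omega) (by omega))


lemma wext_val {ℓ : ℕ} (u : Fin ℓ → Fin ℓ) (j : Fin ℓ) : wext ℓ u (j : ℕ) = (u j : ℕ) := by
  unfold wext; rw [dif_pos j.isLt, Fin.eta]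

lemma wext_eq {ℓ : ℕ} (u : Fin ℓ → Fin ℓ) (j : ℕ) (hj : j < ℓ) :
    wext ℓ u j = (u ⟨j, hj⟩ : ℕ) := by
  unfold wext; rw [dif_pos hj]

lemma eq_of_wext {ℓ : ℕ} {w w' : Fin ℓ → Fin ℓ}
    (h : ∀ j < ℓ, wext ℓ w j = wext ℓ w' j) : w = w' := by
  funext j
  refine Fin.val_injective ?_
  rw [← wext_val w j, ← wext_val w' j]
  exact h j j.isLt

lemma pt_inj {ℓ : ℕ} : Function.Injective (pt ℓ) := by
  intro w w' h
  have hp : (2 : ℝ) ^ (ℓ * ℓ) ≠ 0 := by positivity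
  have hX : Xv ℓ w = Xv ℓ w' := by
    have h1 : (Xv ℓ w : ℝ) / 2 ^ (ℓ * ℓ) = (Xv ℓ w' : ℝ) / 2 ^ (ℓ * ℓ) := congrArg Prod.fst h
    rw [div_eq_div_iff (by positivity) (by positivity)] at h1
    have h2 := mul_right_cancel₀ hp h1
    exact_mod_cast h2
  exact eq_of_wext (Nval_inj (by positivity) (fun k _ => wext_lt w k)
    (fun k _ => wext_lt w' k) hX)

lemma rp_inj {ℓ : ℕ} (hℓ : 1 ≤ ℓ) : Function.Injective (rp ℓ) := by
  intro u u' h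
  unfold rp at h
  simp only [Prod.mk.injEq] at h
  obtain ⟨h1, h2, h3, h4⟩ := h
  have hsc : sc ℓ u = sc ℓ u' := by
    have : sc ℓ u * ℓ = sc ℓ u' * ℓ := by exact_mod_cast neg_inj.1 h2
    exact Nat.eq_of_mul_eq_mul_right hℓ this
  have hb : 0 < 2 ^ ℓ := by positivity
  have h1' : ∀ j < sc ℓ u, dd ℓ u j = dd ℓ u' j := by
    apply Nval_inj hb (fun k _ => dd_lt u k) (fun k _ => dd_lt u' k)
    rw [← hsc] at h1
    exact_mod_cast h1
  have h3' : ∀ j, sc ℓ u < j → j < ℓ → dd ℓ u j = dd ℓ u' j := by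
    have hh := Nval_inj hb (fun k _ => dd_lt u _) (fun k _ => dd_lt u' _)
      (show Nval (2 ^ ℓ) (fun j => dd ℓ u (ℓ - 1 - j)) (ℓ - 1 - sc ℓ u)
          = Nval (2 ^ ℓ) (fun j => dd ℓ u' (ℓ - 1 - j)) (ℓ - 1 - sc ℓ u) by
        rw [← hsc] at h3; exact_mod_cast h3)
    intro j hj1 hj2
    have := hh (ℓ - 1 - j) (by omega)
    simpa [show ℓ - 1 - (ℓ - 1 - j) = j from by omega] using this
  apply eq_of_wext
  intro j hj
  rcases Nat.eq_zero_or_pos j with rfl | hj0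
  · exact hsc
  rcases Nat.lt_or_ge (j - 1) (sc ℓ u) with hlt | hge
  · have hthis := h1' (j - 1) hlt
    unfold dd at hthis
    rw [if_pos hlt, if_pos (hsc ▸ hlt)] at hthis
    rwa [show j - 1 + 1 = j from by omega] at hthis
  · have hgt : sc ℓ u < j := by omega
    have hthis := h3' j hgt hj
    unfold dd at hthis
    rw [if_neg (by omega), if_neg (by rw [← hsc]; omega)] at hthis
    exact hthis

end DyadicLB

open DyadicLB

/-- For every `ℓ ≥ 1` there are a set `P` of `ℓ^ℓ` points in `ℝ²` and a set `B` of `ℓ^ℓ`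
dyadic rectangles (given by their parameters, which determine them uniquely) such that
the incidence graph is `K_{2,2}`-free and the number of incidences equals `ℓ · ℓ^ℓ`. -/
theorem dyadic_lower_bound (ℓ : ℕ) (hℓ : 1 ≤ ℓ) :
    ∃ (P : Finset (ℝ × ℝ)) (B : Finset (ℤ × ℤ × ℤ × ℤ)),
      P.card = ℓ ^ ℓ ∧ B.card = ℓ ^ ℓ ∧
      (¬ ∃ p₁ p₂ R₁ R₂, p₁ ∈ P ∧ p₂ ∈ P ∧ p₁ ≠ p₂ ∧ R₁ ∈ B ∧ R₂ ∈ B ∧ R₁ ≠ R₂ ∧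
        p₁ ∈ dyadicRect R₁ ∧ p₁ ∈ dyadicRect R₂ ∧
        p₂ ∈ dyadicRect R₁ ∧ p₂ ∈ dyadicRect R₂) ∧
      Set.ncard {pr : (ℝ × ℝ) × (ℤ × ℤ × ℤ × ℤ) |
        pr.1 ∈ P ∧ pr.2 ∈ B ∧ pr.1 ∈ dyadicRect pr.2} = ℓ * ℓ ^ ℓ := by
  classical
  refine ⟨Finset.univ.image (pt ℓ), Finset.univ.image (rp ℓ), ?_, ?_, ?_, ?_⟩
  · rw [Finset.card_image_of_injective _ pt_inj, Finset.card_univ, Fintype.card_fun,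
      Fintype.card_fin]
  · rw [Finset.card_image_of_injective _ (rp_inj hℓ), Finset.card_univ, Fintype.card_fun,
      Fintype.card_fin]
  · -- K_{2,2}-freeness
    rintro ⟨p₁, p₂, R₁, R₂, hp₁, hp₂, hpne, hR₁, hR₂, hRne, h11, h12, h21, h22⟩
    simp only [Finset.mem_image, Finset.mem_univ, true_and] at hp₁ hp₂ hR₁ hR₂
    obtain ⟨w₁, rfl⟩ := hp₁
    obtain ⟨w₂, rfl⟩ := hp₂
    obtain ⟨u₁, rfl⟩ := hR₁
    obtain ⟨u₂, rfl⟩ := hR₂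
    rw [pt_mem_rect_iff hℓ] at h11 h12 h21 h22
    by_cases hsc : sc ℓ u₁ = sc ℓ u₂
    · -- same scale: the two rectangles coincide
      apply hRne
      have hdd : ∀ j < ℓ, j ≠ sc ℓ u₁ → dd ℓ u₁ j = dd ℓ u₂ j := by
        intro j hj hne
        rw [← h11 j hj hne, h12 j hj (by rw [← hsc]; exact hne)]
      unfold rp
      rw [← hsc]
      simp only [Prod.mk.injEq]
      refine ⟨?_, trivial, ?_, trivial⟩
      · exact_mod_cast Nval_congr (fun j hj => hdd j (by have := sc_lt hℓ u₁; omega) (by omega))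
      · exact_mod_cast Nval_congr (fun j hj => hdd (ℓ - 1 - j)
          (by omega) (by omega))
    · -- different scales: the two points coincide
      apply hpne
      apply congrArg
      apply eq_of_wext
      intro j hj
      by_cases hj1 : j = sc ℓ u₁
      · have hj2 : j ≠ sc ℓ u₂ := by omega
        rw [h12 j hj hj2, ← h22 j hj hj2]
      · rw [h11 j hj hj1, ← h21 j hj hj1]
  · -- incidence count
    have hiℓ := sc_lt hℓ
    set F : (Fin ℓ → Fin ℓ) × Fin ℓ → (ℝ × ℝ) × (ℤ × ℤ × ℤ × ℤ) :=
      fun p => (pt ℓ (wmod ℓ p.1 p.2), rp ℓ p.1) with hF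
    have hFinj : Function.Injective F := by
      rintro ⟨u, a⟩ ⟨u', a'⟩ h
      simp only [hF, Prod.mk.injEq] at h
      obtain ⟨h1, h2⟩ := h
      have hu : u = u' := rp_inj hℓ h2
      subst hu
      have hw := pt_inj h1
      have ha : (a : ℕ) = (a' : ℕ) := by
        have := congrArg (fun W => wext ℓ W (sc ℓ u)) hw
        simpa [wext_wmod_sc u a hℓ, wext_wmod_sc u a' hℓ] using this
      exact Prod.ext rfl (Fin.val_injective ha)
    have hset : {pr : (ℝ × ℝ) × (ℤ × ℤ × ℤ × ℤ) |
        pr.1 ∈ Finset.univ.image (pt ℓ) ∧ pr.2 ∈ Finset.univ.image (rp ℓ) ∧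
        pr.1 ∈ dyadicRect pr.2} = ↑(Finset.univ.image F) := by
      ext pr
      simp only [Set.mem_setOf_eq, Finset.coe_image, Finset.coe_univ, Set.image_univ,
        Finset.mem_image, Finset.mem_univ, true_and, Set.mem_range]
      constructor
      · rintro ⟨⟨w, hw⟩, ⟨u, hu⟩, hmem⟩
        rw [← hw, ← hu, pt_mem_rect_iff hℓ] at hmem
        refine ⟨⟨u, w ⟨sc ℓ u, hiℓ u⟩⟩, ?_⟩
        have hweq : wmod ℓ u (w ⟨sc ℓ u, hiℓ u⟩) = w := by
          apply eq_of_wext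
          intro j hj
          by_cases hj1 : j = sc ℓ u
          · rw [hj1, wext_wmod_sc u _ hℓ, wext_eq w (sc ℓ u) (hiℓ u)]
          · rw [wext_wmod_eq u _ j hj hj1, hmem j hj hj1]
        refine Prod.ext ?_ ?_
        · show pt ℓ (wmod ℓ u _) = pr.1
          rw [hweq, hw]
        · show rp ℓ u = pr.2
          rw [hu]
      · rintro ⟨⟨u, a⟩, rfl⟩
        refine ⟨⟨wmod ℓ u a, rfl⟩, ⟨u, rfl⟩, ?_⟩
        show pt ℓ (wmod ℓ u a) ∈ dyadicRect (rp ℓ u)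
        rw [pt_mem_rect_iff hℓ]
        intro j hj hj1
        exact wext_wmod_eq u a j hj hj1
    rw [hset, Set.ncard_coe_finset, Finset.card_image_of_injective _ hFinj,
      Finset.card_univ, Fintype.card_prod, Fintype.card_fun, Fintype.card_fin]
    ring
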